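/- For every positive integer n, the number of solutions in nonnegative integers to y_1 + 2y_2 + ... + ny_n ≡ 0 (mod n) with y_1 + ... + y_n = n equals (1/n) Σ_{d | n} φ(n/d) C(2d - 1, d). -/

import Mathlib

noncomputable section BrualdiNewman

section PS
open Finset PowerSeries

def geo (a : ℂ) : ℂ⟦X⟧ := PowerSeries.mk (a ^ ·)

lemma geo_inv (a : ℂ) : (1 - PowerSeries.C a * X) * geo a = 1 := by
  ext k
  rw [sub_mul, one_mul, map_sub, mul_assoc, ← mul_assoc (PowerSeries.C a)]
  rw [mul_comm (PowerSeries.C a) X, mul_assoc]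
  cases k with
  | zero => simp [geo]
  | succ k =>
    rw [coeff_succ_X_mul]
    simp [geo, coeff_mk, pow_succ, mul_comm]

def invSq (q d : ℕ) : ℂ⟦X⟧ :=
  PowerSeries.mk fun k => if q ∣ k then ((k / q + d - 1).choose (d - 1) : ℂ) else 0

lemma coeff_one_sub_Xq_mul (q : ℕ) (f : ℂ⟦X⟧) (k : ℕ) :
    (PowerSeries.coeff k) ((1 - X ^ q) * f)
      = PowerSeries.coeff k f - if q ≤ k then PowerSeries.coeff (k - q) f else 0 := by
  rw [sub_mul, one_mul, map_sub, coeff_X_pow_mul']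

lemma invSq_one (q : ℕ) (hq : 0 < q) : (1 - (X : ℂ⟦X⟧) ^ q) * invSq q 1 = 1 := by
  ext k
  rw [coeff_one_sub_Xq_mul]
  simp only [invSq, coeff_mk, Nat.add_sub_cancel, Nat.sub_self, Nat.choose_zero_right,
    Nat.cast_one, PowerSeries.coeff_one]
  rcases eq_or_ne k 0 with rfl | hk
  · simp [hq.ne']
  · simp only [hk, if_false]
    by_cases hqk : q ≤ k
    · have h1 : q ∣ k ↔ q ∣ (k - q) := by
        constructor
        · intro h; exact Nat.dvd_sub h dvd_rfl
        · intro h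
          have := Nat.dvd_add h (dvd_refl q)
          rwa [Nat.sub_add_cancel hqk] at this
      by_cases hdvd : q ∣ k
      · simp [hdvd, h1.mp hdvd, hqk]
      · simp [hdvd, hqk, mt h1.mpr hdvd]
    · have hdvd : ¬ q ∣ k := fun h => hk (Nat.eq_zero_of_dvd_of_lt h (lt_of_not_ge hqk))
      simp [hdvd, hqk]

lemma invSq_step (q : ℕ) (hq : 0 < q) (d : ℕ) (hd : 0 < d) :
    (1 - (X : ℂ⟦X⟧) ^ q) * invSq q (d + 1) = invSq q d := by
  obtain ⟨d', rfl⟩ : ∃ d', d = d' + 1 := ⟨d - 1, (Nat.succ_pred_eq_of_pos hd).symm⟩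
  ext k
  rw [coeff_one_sub_Xq_mul]
  simp only [invSq, coeff_mk, Nat.add_sub_cancel]
  by_cases hqk : q ≤ k
  · have h1 : q ∣ k ↔ q ∣ (k - q) := by
      constructor
      · intro h; exact Nat.dvd_sub h dvd_rfl
      · intro h
        have := Nat.dvd_add h (dvd_refl q)
        rwa [Nat.sub_add_cancel hqk] at this
    by_cases hdvd : q ∣ k
    · obtain ⟨u, rfl⟩ := hdvd
      have hu1 : 1 ≤ u := by
        rcases Nat.eq_zero_or_pos u with rfl | h
        · simp at hqk; omega
        · exact h
      obtain ⟨v, rfl⟩ : ∃ v, u = v + 1 := ⟨u - 1, (Nat.succ_pred_eq_of_pos hu1).symm⟩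
      have e2 : q * (v + 1) - q = q * v := by rw [Nat.mul_succ, Nat.add_sub_cancel]
      have e1 : q * (v + 1) / q = v + 1 := Nat.mul_div_cancel_left _ hq
      have e3 : q * v / q = v := Nat.mul_div_cancel_left _ hq
      have i1 : v + 1 + (d' + 1 + 1) - 1 = v + d' + 1 + 1 := by omega
      have i3 : v + (d' + 1 + 1) - 1 = v + d' + 1 := by omega
      have i4 : v + 1 + (d' + 1) - 1 = v + d' + 1 := by omega
      simp only [if_pos hqk, if_pos (dvd_mul_right q (v + 1)), e2,
        if_pos (dvd_mul_right q v), e1, e3, i1, i3, i4]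
      rw [Nat.choose_succ_succ]
      push_cast
      ring
    · simp [hdvd, hqk, mt h1.mpr hdvd]
  · by_cases hdvd : q ∣ k
    · have hk0 : k = 0 := Nat.eq_zero_of_dvd_of_lt hdvd (lt_of_not_ge hqk)
      subst hk0
      simp [hqk, Nat.choose_self]
    · simp [hdvd, hqk]

lemma pow_mul_invSq (q : ℕ) (hq : 0 < q) : ∀ d : ℕ, 0 < d →
    (1 - (X : ℂ⟦X⟧) ^ q) ^ d * invSq q d = 1 := by
  intro d
  induction d with
  | zero => omega
  | succ d ih =>
    intro _
    rcases Nat.eq_zero_or_pos d with rfl | hd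
    · rw [pow_one]; exact invSq_one q hq
    · rw [pow_succ, mul_assoc, invSq_step q hq d hd]
      exact ih hd

end PS

section Poly
open Finset Polynomial

lemma nthRootsFinset_eq_image (q : ℕ) (hq : 0 < q) (α : ℂ) (hα : IsPrimitiveRoot α q) :
    nthRootsFinset q (1 : ℂ) = (range q).image (α ^ ·) := by
  rw [nthRootsFinset, hα.nthRoots_eq (one_pow q)]
  ext x
  simp [Multiset.mem_toFinset, Finset.mem_image]

lemma prod_X_sub (q : ℕ) (hq : 0 < q) (α : ℂ) (hα : IsPrimitiveRoot α q) :
    ∏ i ∈ range q, (X - C (α ^ i)) = X ^ q - 1 := by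
  rw [X_pow_sub_one_eq_prod hq hα, nthRootsFinset_eq_image q hq α hα,
    Finset.prod_image (fun x hx y hy h => hα.injOn_pow (by simpa using hx) (by simpa using hy) h)]

lemma neg_one_pow_mul (q : ℕ) (hq : 0 < q) (α : ℂ) (hα : IsPrimitiveRoot α q) :
    (-1 : ℂ) ^ q * α ^ (∑ i ∈ range q, i) = -1 := by
  have h2 : (∑ i ∈ range q, i) * 2 = q * (q - 1) := Finset.sum_range_id_mul_two q
  rcases Nat.even_or_odd q with he | ho
  · -- q even
    obtain ⟨m, hm⟩ := he
    have hm' : q = 2 * m := by omega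
    have hx : α ^ m = -1 := by
      have hne : α ^ m ≠ 1 := hα.pow_ne_one_of_pos_of_lt (by omega) (by omega)
      have hsq : (α ^ m) ^ 2 = 1 := by
        rw [← pow_mul, show m * 2 = q by omega, hα.pow_eq_one]
      have hz : (α ^ m - 1) * (α ^ m + 1) = 0 := by linear_combination hsq
      rcases mul_eq_zero.mp hz with h | h
      · exact absurd (by linear_combination h) hne
      · linear_combination h
    have hs : (∑ i ∈ range q, i) = m * (q - 1) := by
      apply Nat.eq_of_mul_eq_mul_right (show 0 < 2 by norm_num)
      rw [h2, hm']; ring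
    rw [hs, pow_mul, hx, ← pow_add]
    exact Odd.neg_one_pow ⟨q - 1, by omega⟩
  · -- q odd
    obtain ⟨m, hm⟩ := ho
    have hs : (∑ i ∈ range q, i) = q * m := by
      apply Nat.eq_of_mul_eq_mul_right (show 0 < 2 by norm_num)
      rw [h2, show q - 1 = 2 * m by omega]; ring
    rw [hs, pow_mul, hα.pow_eq_one, one_pow, mul_one]
    exact Odd.neg_one_pow ⟨m, hm⟩

lemma prod_one_sub (q : ℕ) (hq : 0 < q) (α : ℂ) (hα : IsPrimitiveRoot α q) :
    ∏ i ∈ range q, (1 - C (α ^ i) * X) = 1 - X ^ q := by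
  have hfac : ∀ i ∈ range q, (1 - C (α ^ i) * X) = C (-(α ^ i)) * (X - C (α ^ (q - i))) := by
    intro i hi
    rw [Finset.mem_range] at hi
    have hpow : (C (α ^ i) : Polynomial ℂ) * C (α ^ (q - i)) = 1 := by
      rw [← Polynomial.C_mul, ← pow_add, show i + (q - i) = q by omega, hα.pow_eq_one,
        Polynomial.C_1]
    rw [map_neg]
    linear_combination -hpow
  rw [Finset.prod_congr rfl hfac, Finset.prod_mul_distrib]
  have h1 : ∏ i ∈ range q, (C (-(α ^ i)) : Polynomial ℂ) = C ((-1) ^ q * α ^ (∑ i ∈ range q, i)) := by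
    rw [← map_prod]
    congr 1
    calc ∏ i ∈ range q, (-(α ^ i))
        = ∏ i ∈ range q, ((-1) * α ^ i) := by
          apply Finset.prod_congr rfl; intro i _; ring
      _ = ((-1 : ℂ) ^ q) * ∏ i ∈ range q, α ^ i := by
          rw [Finset.prod_mul_distrib, Finset.prod_const, Finset.card_range]
      _ = (-1) ^ q * α ^ (∑ i ∈ range q, i) := by
          rw [Finset.prod_pow_eq_pow_sum]
  have h2 : ∏ i ∈ range q, ((X : Polynomial ℂ) - C (α ^ (q - i))) = X ^ q - 1 := by
    have hrefl := Finset.prod_range_reflect (fun j => (X : Polynomial ℂ) - C (α ^ (j + 1))) q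
    have e1 : ∏ i ∈ range q, ((X : Polynomial ℂ) - C (α ^ (q - i)))
        = ∏ i ∈ range q, ((X : Polynomial ℂ) - C (α ^ (i + 1))) := by
      rw [← hrefl]
      apply Finset.prod_congr rfl
      intro i hi
      rw [Finset.mem_range] at hi
      rw [show q - 1 - i + 1 = q - i from by omega]
    have e2 : (∏ i ∈ range q, ((X : Polynomial ℂ) - C (α ^ (i + 1)))) * ((X : Polynomial ℂ) - C (α ^ 0))
        = (∏ i ∈ range q, ((X : Polynomial ℂ) - C (α ^ i))) * ((X : Polynomial ℂ) - C (α ^ 0)) := by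
      rw [← Finset.prod_range_succ' (fun i => (X : Polynomial ℂ) - C (α ^ i)) q]
      rw [Finset.prod_range_succ]
      congr 1
      rw [hα.pow_eq_one, pow_zero]
    have e3 := mul_right_cancel₀ (Polynomial.X_sub_C_ne_zero (α ^ 0)) e2
    rw [e1, e3, prod_X_sub q hq α hα]
  rw [h1, h2, neg_one_pow_mul q hq α hα, map_neg, Polynomial.C_1]
  ring

end Poly

section PS2
open Finset PowerSeries
lemma PS_prod_one_sub_q (q : ℕ) (hq : 0 < q) (α : ℂ) (hα : IsPrimitiveRoot α q) :
    ∏ i ∈ range q, (1 - PowerSeries.C (α ^ i) * X) = 1 - (X : ℂ⟦X⟧) ^ q := by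
  have := congrArg (Polynomial.coeToPowerSeries.ringHom (R := ℂ)) (prod_one_sub q hq α hα)
  rw [map_prod, map_sub, map_one, map_pow] at this
  simp only [map_sub, map_one, map_mul, Polynomial.coeToPowerSeries.ringHom_apply,
    Polynomial.coe_C, Polynomial.coe_X] at this
  exact this

lemma PS_prod_one_sub (q d : ℕ) (hq : 0 < q) (α : ℂ) (hα : IsPrimitiveRoot α q) :
    ∏ i ∈ range (q * d), (1 - PowerSeries.C (α ^ i) * X) = (1 - (X : ℂ⟦X⟧) ^ q) ^ d := by
  induction d with
  | zero => simp
  | succ d ih =>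
    have : q * (d + 1) = q * d + q := by ring
    rw [this, Finset.prod_range_add, ih, pow_succ]
    congr 1
    rw [← PS_prod_one_sub_q q hq α hα]
    apply Finset.prod_congr rfl
    intro i _
    have hpe : α ^ (q * d + i) = α ^ i := by
      rw [pow_add, pow_mul, hα.pow_eq_one, one_pow, one_mul]
    rw [hpe]

lemma geo_ne_zero (a : ℂ) : geo a ≠ 0 := by
  intro h
  have : (PowerSeries.coeff 0) (geo a) = 1 := by simp [geo]
  rw [h] at this
  simp at this

lemma prod_geo_shift (n : ℕ) (α : ℂ) (hαn : α ^ n = 1) :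
    ∏ i ∈ range n, geo (α ^ (i + 1)) = ∏ i ∈ range n, geo (α ^ i) := by
  have e2 : (∏ i ∈ range n, geo (α ^ (i + 1))) * geo (α ^ 0)
      = (∏ i ∈ range n, geo (α ^ i)) * geo (α ^ 0) := by
    rw [← Finset.prod_range_succ' (fun i => geo (α ^ i)) n, Finset.prod_range_succ, hαn, pow_zero]
  exact mul_right_cancel₀ (geo_ne_zero _) e2

lemma prod_geo_eq_invSq (q d : ℕ) (hq : 0 < q) (hd : 0 < d) (α : ℂ)
    (hα : IsPrimitiveRoot α q) :
    ∏ i ∈ range (q * d), geo (α ^ i) = invSq q d := by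
  have hU : (1 - (X : ℂ⟦X⟧) ^ q) ^ d * (∏ i ∈ range (q * d), geo (α ^ i)) = 1 := by
    rw [← PS_prod_one_sub q d hq α hα, ← Finset.prod_mul_distrib]
    rw [Finset.prod_congr rfl (fun i _ => geo_inv (α ^ i))]
    exact Finset.prod_const_one
  have hV := pow_mul_invSq q hq d hd
  calc ∏ i ∈ range (q * d), geo (α ^ i)
      = (∏ i ∈ range (q * d), geo (α ^ i)) * ((1 - (X : ℂ⟦X⟧) ^ q) ^ d * invSq q d) := by
        rw [hV, mul_one]
    _ = invSq q d * ((1 - (X : ℂ⟦X⟧) ^ q) ^ d * (∏ i ∈ range (q * d), geo (α ^ i))) := by ring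
    _ = invSq q d := by rw [hU, mul_one]

lemma coeff_prod_geo (q d : ℕ) (hq : 0 < q) (hd : 0 < d) (α : ℂ)
    (hα : IsPrimitiveRoot α q) :
    (PowerSeries.coeff (q * d)) (∏ i ∈ range (q * d), geo (α ^ (i + 1)))
      = ((2 * d - 1).choose d : ℂ) := by
  rw [prod_geo_shift (q * d) α (by rw [pow_mul, hα.pow_eq_one, one_pow]),
    prod_geo_eq_invSq q d hq hd α hα]
  simp only [invSq, coeff_mk, if_pos (dvd_mul_right q d), Nat.mul_div_cancel_left d hq]
  congr 1
  rw [show d + d - 1 = 2 * d - 1 from by omega, show d - 1 = 2 * d - 1 - d from by omega,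
    Nat.choose_symm (by omega)]

lemma sum_pow_eq_coeff (n : ℕ) (a : Fin n → ℂ) :
    ∑ y ∈ Finset.univ.filter (fun y : Fin n → Fin (n + 1) => (∑ i, ((y i : ℕ))) = n),
        ∏ i, a i ^ ((y i : ℕ))
      = PowerSeries.coeff n (∏ i : Fin n, geo (a i)) := by
  classical
  rw [PowerSeries.coeff_prod]
  refine Finset.sum_nbij' (fun y => Finsupp.equivFunOnFinite.symm (fun i => ((y i : ℕ))))
    (fun l => fun i => (⟨l i % (n + 1), Nat.mod_lt _ (Nat.succ_pos n)⟩ : Fin (n + 1)))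
    ?_ ?_ ?_ ?_ ?_
  · intro y hy
    rw [Finset.mem_filter] at hy
    rw [Finset.mem_finsuppAntidiag]
    refine ⟨?_, fun i _ => Finset.mem_univ i⟩
    simpa using hy.2
  · intro l hl
    rw [Finset.mem_filter]
    refine ⟨Finset.mem_univ _, ?_⟩
    rw [Finset.mem_finsuppAntidiag] at hl
    have hle : ∀ i, l i ≤ n := fun i =>
      (Finset.single_le_sum (f := fun j => l j) (fun j _ => Nat.zero_le _)
        (Finset.mem_univ i)).trans (le_of_eq hl.1)
    calc ∑ i : Fin n, ((⟨l i % (n + 1), Nat.mod_lt _ (Nat.succ_pos n)⟩ : Fin (n + 1)) : ℕ)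
        = ∑ i : Fin n, l i := by
          apply Finset.sum_congr rfl
          intro i _
          simp [Nat.mod_eq_of_lt (Nat.lt_succ_of_le (hle i))]
      _ = n := hl.1
  · intro y hy
    funext i
    rw [Finset.mem_filter] at hy
    have hle : (y i : ℕ) ≤ n :=
      (Finset.single_le_sum (f := fun j => ((y j : ℕ))) (fun j _ => Nat.zero_le _)
        (Finset.mem_univ i)).trans (le_of_eq hy.2)
    apply Fin.ext
    simp [Nat.mod_eq_of_lt (Nat.lt_succ_of_le hle)]
  · intro l hl
    rw [Finset.mem_finsuppAntidiag] at hl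
    have hle : ∀ i, l i ≤ n := fun i =>
      (Finset.single_le_sum (f := fun j => l j) (fun j _ => Nat.zero_le _)
        (Finset.mem_univ i)).trans (le_of_eq hl.1)
    ext i
    simp [Nat.mod_eq_of_lt (Nat.lt_succ_of_le (hle i))]
  · intro y hy
    apply Finset.prod_congr rfl
    intro i _
    simp [geo]

end PS2

section NatPart
open Finset
lemma card_gcd_fiber (n d : ℕ) (hn : 0 < n) (hdvd : d ∣ n) (hd : 0 < d) :
    ((range n).filter (fun j => Nat.gcd j n = d)).card = Nat.totient (n / d) := by
  rw [Nat.totient_eq_card_coprime]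
  apply Finset.card_nbij' (i := fun j => j / d) (j := fun k => d * k)
  · intro j hj
    rw [Finset.mem_coe, Finset.mem_filter, Finset.mem_range] at hj
    obtain ⟨hjn, hgcd⟩ := hj
    rw [Finset.mem_coe, Finset.mem_filter, Finset.mem_range]
    constructor
    · exact Nat.div_lt_div_of_lt_of_dvd (hgcd ▸ Nat.gcd_dvd_right j n) hjn
    · have := Nat.coprime_div_gcd_div_gcd (m := j) (n := n) (hgcd ▸ hd)
      rw [hgcd] at this
      exact this.symm
  · intro k hk
    rw [Finset.mem_coe, Finset.mem_filter, Finset.mem_range] at hk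
    obtain ⟨hkn, hcop⟩ := hk
    rw [Finset.mem_coe, Finset.mem_filter, Finset.mem_range]
    constructor
    · calc d * k < d * (n / d) := by exact (Nat.mul_lt_mul_left hd).mpr hkn
        _ = n := Nat.mul_div_cancel' hdvd
    · have : Nat.gcd (d * k) (d * (n / d)) = d * Nat.gcd k (n / d) := Nat.gcd_mul_left d k (n / d)
      rw [Nat.mul_div_cancel' hdvd] at this
      rw [this, Nat.Coprime.gcd_eq_one hcop.symm, mul_one]
  · intro j hj
    rw [Finset.mem_coe, Finset.mem_filter] at hj
    exact Nat.mul_div_cancel' (hj.2 ▸ Nat.gcd_dvd_left j n)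
  · intro k hk
    exact Nat.mul_div_cancel_left k hd

lemma regroup_gcd (n : ℕ) (hn : 0 < n) (c : ℕ → ℕ) :
    ∑ j ∈ range n, c (Nat.gcd j n) = ∑ d ∈ n.divisors, (n / d).totient * c d := by
  have hmaps : ∀ j ∈ range n, Nat.gcd j n ∈ n.divisors := by
    intro j _
    exact Nat.mem_divisors.mpr ⟨Nat.gcd_dvd_right j n, hn.ne'⟩
  rw [← Finset.sum_fiberwise_of_maps_to hmaps (fun j => c (Nat.gcd j n))]
  apply Finset.sum_congr rfl
  intro d hd
  have : ∀ j ∈ (range n).filter (fun j => Nat.gcd j n = d), c (Nat.gcd j n) = c d := by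
    intro j hj
    rw [Finset.mem_filter] at hj
    rw [hj.2]
  rw [Finset.sum_congr rfl this, Finset.sum_const, smul_eq_mul]
  rw [Nat.mem_divisors] at hd
  rw [card_gcd_fiber n d hn hd.1 (Nat.pos_of_dvd_of_pos hd.1 hn)]

end NatPart

section Main
open Finset PowerSeries

theorem stmt_17 (n : ℕ) (hn : 0 < n) :
    n * (Finset.univ.filter (fun y : Fin n → Fin (n + 1) =>
        (∑ i : Fin n, (y i : ℕ)) = n ∧
        (∑ i : Fin n, ((i : ℕ) + 1) * (y i : ℕ)) % n = 0)).card
      = ∑ d ∈ n.divisors, Nat.totient (n / d) * Nat.choose (2 * d - 1) d := by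
  classical
  set w : (Fin n → Fin (n + 1)) → ℕ := fun y => ∑ i : Fin n, ((i : ℕ) + 1) * (y i : ℕ) with hw
  set T : Finset (Fin n → Fin (n + 1)) :=
    Finset.univ.filter (fun y => (∑ i : Fin n, (y i : ℕ)) = n) with hT
  have hζ : IsPrimitiveRoot (Complex.exp (2 * Real.pi * Complex.I / n)) n :=
    Complex.isPrimitiveRoot_exp n hn.ne'
  set ζ : ℂ := Complex.exp (2 * Real.pi * Complex.I / n) with hzeta
  -- Step C: per j value
  have stepC : ∀ j ∈ range n,
      ∑ y ∈ T, ζ ^ (j * w y) = ((2 * Nat.gcd j n - 1).choose (Nat.gcd j n) : ℂ) := by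
    intro j _
    set d := Nat.gcd j n with hdd
    have hd : 0 < d := Nat.gcd_pos_of_pos_right j hn
    set q := n / d with hqq
    have hdvdn : d ∣ n := Nat.gcd_dvd_right j n
    have hnqd : n = q * d := (Nat.div_mul_cancel hdvdn).symm
    have hq : 0 < q := Nat.div_pos (Nat.le_of_dvd hn hdvdn) hd
    have hα : IsPrimitiveRoot (ζ ^ j) q := by
      have h1 : IsPrimitiveRoot (ζ ^ d) q := hζ.pow hn (by rw [hnqd]; ring)
      have h2 := h1.pow_of_coprime (j / d) (Nat.coprime_div_gcd_div_gcd (hdd ▸ hd))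
      rwa [← pow_mul, Nat.mul_div_cancel' (Nat.gcd_dvd_left j n)] at h2
    have hterm : ∀ y ∈ T, ζ ^ (j * w y) = ∏ i : Fin n, ((ζ ^ j) ^ ((i : ℕ) + 1)) ^ ((y i : ℕ)) := by
      intro y _
      rw [hw, Finset.mul_sum, ← Finset.prod_pow_eq_pow_sum]
      apply Finset.prod_congr rfl
      intro i _
      rw [show j * (((i : ℕ) + 1) * ((y i : ℕ))) = j * ((i : ℕ) + 1) * ((y i : ℕ))
        from (mul_assoc _ _ _).symm, pow_mul, pow_mul]
    rw [Finset.sum_congr rfl hterm, hT,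
      sum_pow_eq_coeff n (fun i => (ζ ^ j) ^ ((i : ℕ) + 1))]
    have : ∏ i : Fin n, geo ((ζ ^ j) ^ ((i : ℕ) + 1))
        = ∏ i ∈ range n, geo ((ζ ^ j) ^ (i + 1)) :=
      Fin.prod_univ_eq_prod_range (fun i => geo ((ζ ^ j) ^ (i + 1))) n
    rw [this]
    rw [hnqd] at *
    exact coeff_prod_geo q d hq hd (ζ ^ j) hα
  -- Step B : swap
  have stepB : ∑ j ∈ range n, ∑ y ∈ T, ζ ^ (j * w y)
      = (n : ℂ) * (Finset.univ.filter (fun y : Fin n → Fin (n + 1) =>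
          (∑ i : Fin n, (y i : ℕ)) = n ∧ w y % n = 0)).card := by
    rw [Finset.sum_comm]
    have hysum : ∀ y ∈ T, ∑ j ∈ range n, ζ ^ (j * w y)
        = if n ∣ w y then (n : ℂ) else 0 := by
      intro y _
      have hrw : ∀ j, ζ ^ (j * w y) = (ζ ^ w y) ^ j := by
        intro j
        rw [← pow_mul, mul_comm]
      rw [Finset.sum_congr rfl (fun j _ => hrw j)]
      by_cases hdvd : n ∣ w y
      · rw [if_pos hdvd, (hζ.pow_eq_one_iff_dvd (w y)).mpr hdvd]
        simp
      · rw [if_neg hdvd]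
        have hne : ζ ^ w y ≠ 1 := fun h => hdvd ((hζ.pow_eq_one_iff_dvd (w y)).mp h)
        rw [geom_sum_eq hne]
        have : (ζ ^ w y) ^ n = 1 := by
          rw [← pow_mul, mul_comm, pow_mul, hζ.pow_eq_one, one_pow]
        rw [this, sub_self, zero_div]
    rw [Finset.sum_congr rfl hysum, ← Finset.sum_filter]
    rw [Finset.sum_const, nsmul_eq_mul]
    rw [hT, Finset.filter_filter]
    have : ∀ y : Fin n → Fin (n + 1),
        ((∑ i : Fin n, (y i : ℕ)) = n ∧ n ∣ w y) ↔
        ((∑ i : Fin n, (y i : ℕ)) = n ∧ w y % n = 0) := by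
      intro y
      rw [Nat.dvd_iff_mod_eq_zero]
    rw [Finset.filter_congr (fun y _ => this y)]
    ring
  -- assemble
  have main : ((n * (Finset.univ.filter (fun y : Fin n → Fin (n + 1) =>
      (∑ i : Fin n, (y i : ℕ)) = n ∧
      (∑ i : Fin n, ((i : ℕ) + 1) * (y i : ℕ)) % n = 0)).card : ℕ) : ℂ)
      = ((∑ d ∈ n.divisors, Nat.totient (n / d) * Nat.choose (2 * d - 1) d : ℕ) : ℂ) := by
    push_cast
    rw [← stepB, Finset.sum_congr rfl stepC, ← Nat.cast_sum,
      regroup_gcd n hn (fun d => (2 * d - 1).choose d)]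
    push_cast
    rfl
  exact_mod_cast main

end Main

end BrualdiNewman
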